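/- Let h be a Lie algebra over ℂ and let Y, a, b ∈ h. Set Z := [Y, a], and for m ≥ 0 set a_m := (ad Z)^m(a) and b_m := (ad Z)^m(b). Assume (i) [Y, Z] = 0, (ii) [a_m, a_{m'}] = 0 for all m, m' ≥ 0, and (iii) [a_m, [a_{m'}, [Y, b_j]]] = 0 for all m, m', j ≥ 0. For a tuple (j_1, …, j_{p−1}; j_p) of nonnegative integers write W(j_1, …, j_{p−1}; j_p) := [a_{j_1}, [a_{j_2}, …, [a_{j_{p−1}}, b_{j_p}]⋯]]. Then for every p ≥ 2 and all nonnegative integers i_1, …, i_p and j there exists a finitely supported family c of nonnegative integers, indexed by tuples (j_1, …, j_{p−1}; j_p) with j_1 ≤ ⋯ ≤ j_{p−1}, such that [Y, [a_{i_1}, [a_{i_2}, …, [a_{i_p}, b_j]⋯]]] = Σ c(j_1, …, j_{p−1}; j_p) · W(j_1, …, j_{p−1}; j_p). Moreover, if for some position t with t + 2 ≤ p one has i_t = i_{t+1} = 0 and i_{t+2} > 0, then the family c can be chosen so that its value at the nondecreasing reordering of (i_1, …, i_{t−1}, 1, i_{t+2}, …, i_p; j) and its value at the nondecreasing reordering of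 (i_1, …, i_t, i_{t+2}, …, i_p; j+1) are both strictly positive. -/

import Mathlib

noncomputable section

/-- `iterBr A Bj [j₁, …, j_q] = [A j₁, [A j₂, …, [A j_q, Bj]⋯]]`. -/
def iterBr {h : Type} [LieRing h] (A : ℕ → h) (Bj : h) (js : List ℕ) : h :=
  js.foldr (fun k acc => ⁅A k, acc⁆) Bj


namespace St7

@[simp] theorem iterBr_nil {h : Type} [LieRing h] (A : ℕ → h) (c : h) :
    iterBr A c [] = c := rfl

@[simp] theorem iterBr_cons {h : Type} [LieRing h] (A : ℕ → h) (c : h) (k : ℕ) (l : List ℕ) :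
    iterBr A c (k :: l) = ⁅A k, iterBr A c l⁆ := rfl

/-- increment the `s`-th entry of a list -/
def bump : List ℕ → ℕ → List ℕ
  | [], _ => []
  | k :: l, 0 => (k + 1) :: l
  | k :: l, s + 1 => k :: bump l s

/-- prepend `k` to the list-component of each key -/
def mapcons (k : ℕ) (c : (List ℕ × ℕ) →₀ ℕ) : (List ℕ × ℕ) →₀ ℕ :=
  Finsupp.mapDomain (fun t => (k :: t.1, t.2)) c

/-- the combination representing `⁅Z, iterBr A (B j) l⁆` -/
def Zc : List ℕ → ℕ → ((List ℕ × ℕ) →₀ ℕ)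
  | [], j => Finsupp.single ([], j + 1) 1
  | k :: l, j => Finsupp.single ((k + 1) :: l, j) 1 + mapcons k (Zc l j)

/-- the combination representing `⁅Y, iterBr A (B j) l⁆` (up to the `⁅Y, B j⁆` tail term) -/
def Yc : List ℕ → ℕ → ((List ℕ × ℕ) →₀ ℕ)
  | [], _ => 0
  | k :: l, j => (if k = 0 then Zc l j else 0) + mapcons k (Yc l j)

variable {h : Type} [LieRing h]

def ev (A B : ℕ → h) (c : (List ℕ × ℕ) →₀ ℕ) : h :=
  c.sum fun t n => n • iterBr A (B t.2) t.1

theorem ev_add (A B : ℕ → h) (c₁ c₂ : (List ℕ × ℕ) →₀ ℕ) :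
    ev A B (c₁ + c₂) = ev A B c₁ + ev A B c₂ :=
  Finsupp.sum_add_index' (fun _ => zero_nsmul _) (fun t m n => add_nsmul _ m n)

@[simp] theorem ev_zero (A B : ℕ → h) : ev A B 0 = 0 := Finsupp.sum_zero_index

theorem ev_single (A B : ℕ → h) (t : List ℕ × ℕ) (n : ℕ) :
    ev A B (Finsupp.single t n) = n • iterBr A (B t.2) t.1 :=
  Finsupp.sum_single_index (zero_nsmul _)

theorem ev_mapDomain (A B : ℕ → h) (f : List ℕ × ℕ → List ℕ × ℕ) (c : (List ℕ × ℕ) →₀ ℕ) :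
    ev A B (Finsupp.mapDomain f c) = c.sum fun t n => n • iterBr A (B (f t).2) (f t).1 :=
  Finsupp.sum_mapDomain_index (fun _ => zero_nsmul _) (fun t m n => add_nsmul _ m n)

theorem lie_ev (A B : ℕ → h) (x : h) (c : (List ℕ × ℕ) →₀ ℕ) :
    ⁅x, ev A B c⁆ = c.sum fun t n => n • ⁅x, iterBr A (B t.2) t.1⁆ := by
  let L : h →+ h := AddMonoidHom.mk' (fun y => ⁅x, y⁆) (lie_add x)
  have : ∀ y, L y = ⁅x, y⁆ := fun _ => rfl
  rw [ev, ← this, map_finsuppSum]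
  exact Finsupp.sum_congr fun t _ => by rw [this, lie_nsmul]

theorem ev_mapcons (A B : ℕ → h) (k : ℕ) (c : (List ℕ × ℕ) →₀ ℕ) :
    ev A B (mapcons k c) = ⁅A k, ev A B c⁆ := by
  rw [mapcons, ev_mapDomain, lie_ev]
  rfl

end St7

namespace St7

variable {h : Type} [LieRing h]

theorem evZ (A B : ℕ → h) (Z : h) (hZA : ∀ k, ⁅Z, A k⁆ = A (k + 1))
    (hZB : ∀ j, ⁅Z, B j⁆ = B (j + 1)) :
    ∀ (l : List ℕ) (j : ℕ), ⁅Z, iterBr A (B j) l⁆ = ev A B (Zc l j) := by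
  intro l
  induction l with
  | nil => intro j; simp [Zc, ev_single, hZB]
  | cons k l ih =>
    intro j
    rw [iterBr_cons, leibniz_lie, hZA, Zc, ev_add, ev_single, ev_mapcons, ← ih, one_nsmul,
      iterBr_cons]

theorem evY (A B : ℕ → h) (Y Z : h) (hZA : ∀ k, ⁅Z, A k⁆ = A (k + 1))
    (hZB : ∀ j, ⁅Z, B j⁆ = B (j + 1)) (hY0 : ⁅Y, A 0⁆ = Z) (hYs : ∀ k, ⁅Y, A (k + 1)⁆ = 0) :
    ∀ (l : List ℕ) (j : ℕ),
      ⁅Y, iterBr A (B j) l⁆ = ev A B (Yc l j) + iterBr A ⁅Y, B j⁆ l := by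
  intro l
  induction l with
  | nil => intro j; simp [Yc]
  | cons k l ih =>
    intro j
    rw [iterBr_cons, leibniz_lie, Yc, ev_add, ev_mapcons, ih, lie_add, iterBr_cons]
    cases k with
    | zero => rw [hY0, evZ A B Z hZA hZB]; simp
              abel
    | succ k => rw [hYs]; simp

theorem iterBr_zero (A : ℕ → h) : ∀ l : List ℕ, iterBr A (0 : h) l = 0 := by
  intro l; induction l with
  | nil => rfl
  | cons k l ih => rw [iterBr_cons, ih, lie_zero]

theorem vanish (A B : ℕ → h) (Y : h) (h3 : ∀ k k' j : ℕ, ⁅A k, ⁅A k', ⁅Y, B j⁆⁆⁆ = 0)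
    (j : ℕ) : ∀ l : List ℕ, 2 ≤ l.length → iterBr A ⁅Y, B j⁆ l = 0 := by
  intro l
  induction l with
  | nil => simp
  | cons k l ih =>
    intro hl
    match l, ih with
    | [], _ => simp at hl
    | [k'], _ => simpa using h3 k k' j
    | k' :: k'' :: l', ih =>
      rw [iterBr_cons, ih (by simp), lie_zero]

theorem iterBr_perm (A : ℕ → h) (c : h) (hc : ∀ k k' : ℕ, ⁅A k, A k'⁆ = 0) :
    ∀ {l l' : List ℕ}, l.Perm l' → iterBr A c l = iterBr A c l' := by
  intro l l' p
  induction p with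
  | nil => rfl
  | cons x p ih => rw [iterBr_cons, iterBr_cons, ih]
  | swap x y l =>
    show ⁅A y, ⁅A x, iterBr A c l⁆⁆ = ⁅A x, ⁅A y, iterBr A c l⁆⁆
    rw [leibniz_lie (A y) (A x), hc, zero_lie, zero_add]
  | trans _ _ ih₁ ih₂ => rw [ih₁, ih₂]

theorem iterBr_sort (A : ℕ → h) (c : h) (hc : ∀ k k' : ℕ, ⁅A k, A k'⁆ = 0) (l : List ℕ) :
    iterBr A c (l.insertionSort (· ≤ ·)) = iterBr A c l :=
  iterBr_perm A c hc (List.perm_insertionSort _ l)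

theorem Zc_support : ∀ (l : List ℕ) (j : ℕ), ∀ t ∈ (Zc l j).support, t.1.length = l.length := by
  intro l
  induction l with
  | nil =>
    intro j t ht
    have := Finsupp.support_single_subset ht
    simp at this; simp [this]
  | cons k l ih =>
    intro j t ht
    rcases Finset.mem_union.mp (Finsupp.support_add ht) with h' | h'
    · have := Finsupp.support_single_subset h'
      simp at this; simp [this]
    · rcases Finset.mem_image.mp (Finsupp.mapDomain_support h') with ⟨s, hs, rfl⟩
      simp [ih j s hs]

theorem Yc_support : ∀ (l : List ℕ) (j : ℕ), ∀ t ∈ (Yc l j).support,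
    t.1.length + 1 = l.length := by
  intro l
  induction l with
  | nil => intro j t ht; simp [Yc] at ht
  | cons k l ih =>
    intro j t ht
    rcases Finset.mem_union.mp (Finsupp.support_add ht) with h' | h'
    · by_cases hk : k = 0
      · rw [if_pos hk] at h'
        simp [Zc_support l j t h']
      · rw [if_neg hk] at h'; simp at h'
    · rcases Finset.mem_image.mp (Finsupp.mapDomain_support h') with ⟨s, hs, rfl⟩
      simp [ih j s hs]

theorem le_mapDomain {α β : Type*} (f : α → β) (c : α →₀ ℕ) (a : α) :
    c a ≤ (Finsupp.mapDomain f c) (f a) := by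
  classical
  rw [Finsupp.mapDomain, Finsupp.sum_apply]
  by_cases ha : a ∈ c.support
  · have h1 : (Finsupp.single (f a) (c a) : β →₀ ℕ) (f a) = c a := Finsupp.single_eq_same
    calc c a = (Finsupp.single (f a) (c a) : β →₀ ℕ) (f a) := h1.symm
      _ ≤ _ := Finset.single_le_sum (f := fun a' => (Finsupp.single (f a') (c a') : β →₀ ℕ) (f a))
          (fun _ _ => Nat.zero_le _) ha
  · simp [Finsupp.notMem_support_iff.mp ha]

end St7

namespace St7

theorem zc_bump0 (k : ℕ) (l : List ℕ) (j : ℕ) : 1 ≤ Zc (k :: l) j ((k + 1) :: l, j) := by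
  rw [Zc, Finsupp.add_apply]
  have : (Finsupp.single ((k + 1) :: l, j) (1:ℕ)) ((k + 1) :: l, j) = 1 := Finsupp.single_eq_same
  omega

theorem zc_self : ∀ (l : List ℕ) (j : ℕ), 1 ≤ Zc l j (l, j + 1) := by
  intro l
  induction l with
  | nil => intro j; simp [Zc]
  | cons k l ih =>
    intro j
    rw [Zc, Finsupp.add_apply]
    have h1 : Zc l j (l, j + 1) ≤ (mapcons k (Zc l j)) (k :: l, j + 1) :=
      le_mapDomain (fun t => (k :: t.1, t.2)) (Zc l j) (l, j + 1)
    have := ih j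
    omega

theorem posA : ∀ (t : ℕ) (l : List ℕ) (j : ℕ), t + 1 < l.length → l.getD t 0 = 0 →
    1 ≤ Yc l j (l.take t ++ bump (l.drop (t + 1)) 0, j) := by
  intro t
  induction t with
  | zero =>
    intro l j hlen hget
    match l with
    | k :: k2 :: l' =>
      simp at hget
      subst hget
      show 1 ≤ Yc (0 :: k2 :: l') j (bump (k2 :: l') 0, j)
      rw [Yc, if_pos rfl, Finsupp.add_apply]
      have := zc_bump0 k2 l' j
      show 1 ≤ Zc (k2 :: l') j ((k2 + 1) :: l', j) + _
      omega
  | succ t ih =>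
    intro l j hlen hget
    match l with
    | k :: l' =>
      simp at hlen
      have hget' : l'.getD t 0 = 0 := hget
      have key : 1 ≤ Yc l' j (l'.take t ++ bump (l'.drop (t + 1)) 0, j) :=
        ih l' j (by omega) hget'
      show 1 ≤ Yc (k :: l') j ((k :: l').take (t + 1) ++ bump ((k :: l').drop (t + 2)) 0, j)
      have hx : (k :: l').take (t + 1) ++ bump ((k :: l').drop (t + 2)) 0
          = k :: (l'.take t ++ bump (l'.drop (t + 1)) 0) := by simp
      rw [hx, Yc, Finsupp.add_apply]
      have h1 : Yc l' j (l'.take t ++ bump (l'.drop (t + 1)) 0, j)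
          ≤ (mapcons k (Yc l' j)) (k :: (l'.take t ++ bump (l'.drop (t + 1)) 0), j) :=
        le_mapDomain (fun s : List ℕ × ℕ => (k :: s.1, s.2)) (Yc l' j) _
      omega

theorem posB : ∀ (t : ℕ) (l : List ℕ) (j : ℕ), t < l.length → l.getD t 0 = 0 →
    1 ≤ Yc l j (l.take t ++ l.drop (t + 1), j + 1) := by
  intro t
  induction t with
  | zero =>
    intro l j hlen hget
    match l with
    | k :: l' =>
      simp at hget
      subst hget
      show 1 ≤ Yc (0 :: l') j (l', j + 1)
      rw [Yc, if_pos rfl, Finsupp.add_apply]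
      have := zc_self l' j
      omega
  | succ t ih =>
    intro l j hlen hget
    match l with
    | k :: l' =>
      simp at hlen
      have hget' : l'.getD t 0 = 0 := hget
      have key := ih l' j (by omega) hget'
      show 1 ≤ Yc (k :: l') j ((k :: l').take (t + 1) ++ (k :: l').drop (t + 2), j + 1)
      have hx : (k :: l').take (t + 1) ++ (k :: l').drop (t + 2)
          = k :: (l'.take t ++ l'.drop (t + 1)) := by simp
      rw [hx, Yc, Finsupp.add_apply]
      have h1 : Yc l' j (l'.take t ++ l'.drop (t + 1), j + 1)
          ≤ (mapcons k (Yc l' j)) (k :: (l'.take t ++ l'.drop (t + 1)), j + 1) :=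
        le_mapDomain (fun s : List ℕ × ℕ => (k :: s.1, s.2)) (Yc l' j) _
      omega

end St7


open St7 in
/-- Let `h` be a complex Lie algebra, `Y, a, b ∈ h`, `Z := [Y, a]`,
`a_m := (ad Z)^m a`, `b_m := (ad Z)^m b`.  Assume `[Y, Z] = 0`, all `a_m` commute, and
`[a_m, [a_{m'}, [Y, b_j]]] = 0`.  Then every bracket `[Y, [a_{i₁}, …, [a_{i_p}, b_j]⋯]]`
(`p ≥ 2`) is a finite `ℕ`-linear combination of the elements
`W(j₁, …, j_{p-1}; j_p) = [a_{j₁}, …, [a_{j_{p-1}}, b_{j_p}]⋯]` with `j₁ ≤ ⋯ ≤ j_{p-1}`;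
moreover, if `i_t = i_{t+1} = 0` and `i_{t+2} > 0` (for a position `t` with `t + 2 ≤ p`,
written here with `0`-based indices, so `t + 2 < p`), the combination can be chosen with
strictly positive coefficients at the nondecreasing reorderings of
`(i₁, …, i_{t-1}, 1, i_{t+2}, …, i_p; j)` and of `(i₁, …, i_t, i_{t+2}, …, i_p; j+1)`. -/
theorem bracket_with_Y_as_nonneg_combination
    (h : Type) [LieRing h] [LieAlgebra ℂ h] (Y a b Z : h) (hZ : Z = ⁅Y, a⁆)
    (A B : ℕ → h)
    (hA : ∀ k : ℕ, A k = ((LieAlgebra.ad ℂ h Z) ^ k) a)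
    (hB : ∀ k : ℕ, B k = ((LieAlgebra.ad ℂ h Z) ^ k) b)
    (h1 : ⁅Y, Z⁆ = 0)
    (h2 : ∀ k k' : ℕ, ⁅A k, A k'⁆ = 0)
    (h3 : ∀ k k' j : ℕ, ⁅A k, ⁅A k', ⁅Y, B j⁆⁆⁆ = 0) :
    ∀ p : ℕ, 2 ≤ p → ∀ il : List ℕ, il.length = p → ∀ j : ℕ,
      (∃ c : (List ℕ × ℕ) →₀ ℕ,
        (∀ t ∈ c.support, t.1.length = p - 1 ∧ t.1.Pairwise (· ≤ ·)) ∧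
        ⁅Y, iterBr A (B j) il⁆ = c.sum fun t k => k • iterBr A (B t.2) t.1) ∧
      (∀ t : ℕ, t + 2 < p →
        il.getD t 0 = 0 → il.getD (t + 1) 0 = 0 → 0 < il.getD (t + 2) 0 →
        ∃ c : (List ℕ × ℕ) →₀ ℕ,
          (∀ s ∈ c.support, s.1.length = p - 1 ∧ s.1.Pairwise (· ≤ ·)) ∧
          ⁅Y, iterBr A (B j) il⁆ = (c.sum fun s k => k • iterBr A (B s.2) s.1) ∧
          0 < c ((il.take t ++ [1] ++ il.drop (t + 2)).insertionSort (· ≤ ·), j) ∧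
          0 < c ((il.take (t + 1) ++ il.drop (t + 2)).insertionSort (· ≤ ·), j + 1)) := by
  classical
  -- ad Y and ad Z commute
  have hcomm : (LieAlgebra.ad ℂ h Y) * (LieAlgebra.ad ℂ h Z)
      = (LieAlgebra.ad ℂ h Z) * (LieAlgebra.ad ℂ h Y) := by
    ext x
    simp only [Module.End.mul_apply, LieAlgebra.ad_apply]
    rw [leibniz_lie Y Z x, h1, zero_lie, zero_add]
  have hZA : ∀ k, ⁅Z, A k⁆ = A (k + 1) := by
    intro k
    rw [hA k, hA (k + 1), pow_succ', Module.End.mul_apply, LieAlgebra.ad_apply]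
  have hZB : ∀ k, ⁅Z, B k⁆ = B (k + 1) := by
    intro k
    rw [hB k, hB (k + 1), pow_succ', Module.End.mul_apply, LieAlgebra.ad_apply]
  have hY0 : ⁅Y, A 0⁆ = Z := by rw [hA 0, pow_zero, Module.End.one_apply]; exact hZ.symm
  have hYs : ∀ k, ⁅Y, A (k + 1)⁆ = 0 := by
    intro k
    have hYZa : ⁅Y, ⁅Z, a⁆⁆ = 0 := by
      rw [leibniz_lie Y Z a, h1, zero_lie, ← hZ, lie_self, add_zero]
    have hc : (LieAlgebra.ad ℂ h Y) * (LieAlgebra.ad ℂ h Z) ^ k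
        = (LieAlgebra.ad ℂ h Z) ^ k * (LieAlgebra.ad ℂ h Y) := (Commute.pow_right hcomm k)
    have adapp : ∀ x y : h, (LieAlgebra.ad ℂ h x) y = ⁅x, y⁆ := fun x y => by
      simp [LieAlgebra.ad_apply]
    rw [hA, pow_succ, Module.End.mul_apply]
    calc ⁅Y, ((LieAlgebra.ad ℂ h Z) ^ k) ((LieAlgebra.ad ℂ h Z) a)⁆
        = ((LieAlgebra.ad ℂ h Y) * (LieAlgebra.ad ℂ h Z) ^ k) ((LieAlgebra.ad ℂ h Z) a) := by
          rw [Module.End.mul_apply]; exact (adapp Y _).symm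
      _ = ((LieAlgebra.ad ℂ h Z) ^ k * (LieAlgebra.ad ℂ h Y)) ((LieAlgebra.ad ℂ h Z) a) := by
          rw [hc]
      _ = ((LieAlgebra.ad ℂ h Z) ^ k) ((LieAlgebra.ad ℂ h Y) ((LieAlgebra.ad ℂ h Z) a)) :=
          Module.End.mul_apply _ _ _
      _ = 0 := by rw [adapp, adapp, hYZa, map_zero]
  intro p hp il hlen j
  set sortf : List ℕ × ℕ → List ℕ × ℕ := fun t => (t.1.insertionSort (· ≤ ·), t.2) with hsortf
  set c0 := Yc il j with hc0
  set c := Finsupp.mapDomain sortf c0 with hc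
  have heq : ⁅Y, iterBr A (B j) il⁆ = ev A B c := by
    rw [evY A B Y Z hZA hZB hY0 hYs il j,
      vanish A B Y h3 j il (by rw [hlen]; exact hp), add_zero, hc, ev_mapDomain]
    exact (Finsupp.sum_congr fun t _ => by
      rw [show (sortf t).1 = t.1.insertionSort (· ≤ ·) from rfl,
        show (sortf t).2 = t.2 from rfl, iterBr_sort A (B t.2) h2 t.1]).symm
  have hsupp : ∀ s ∈ c.support, s.1.length = p - 1 ∧ s.1.Pairwise (· ≤ ·) := by
    intro s hs
    rcases Finset.mem_image.mp (Finsupp.mapDomain_support hs) with ⟨u, hu, rfl⟩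
    have hl := Yc_support il j u hu
    constructor
    · show (u.1.insertionSort (· ≤ ·)).length = p - 1
      rw [(List.perm_insertionSort _ u.1).length_eq]
      omega
    · exact List.pairwise_insertionSort _ u.1
  refine ⟨⟨c, hsupp, heq⟩, ?_⟩
  intro t ht hg0 hg1 hg2
  refine ⟨c, hsupp, heq, ?_, ?_⟩
  · -- key 1
    have h5 : t + 1 < il.length := by omega
    have e1 : il.take t ++ [1] ++ il.drop (t + 2) = il.take t ++ bump (il.drop (t + 1)) 0 := by
      rw [List.drop_eq_getElem_cons h5, ← List.getD_eq_getElem il 0 h5, hg1]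
      show _ = il.take t ++ (1 :: il.drop (t + 2))
      rw [List.append_assoc]
      rfl
    have p1 : 1 ≤ c0 (il.take t ++ bump (il.drop (t + 1)) 0, j) :=
      posA t il j (by omega) hg0
    have p2 := le_mapDomain sortf c0 (il.take t ++ bump (il.drop (t + 1)) 0, j)
    have e2 : sortf (il.take t ++ bump (il.drop (t + 1)) 0, j)
        = ((il.take t ++ [1] ++ il.drop (t + 2)).insertionSort (· ≤ ·), j) := by
      rw [e1]
    rw [e2] at p2
    rw [hc] at *
    omega
  · -- key 2
    have p1 : 1 ≤ c0 (il.take (t + 1) ++ il.drop (t + 2), j + 1) :=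
      posB (t + 1) il j (by omega) hg1
    have p2 := le_mapDomain sortf c0 (il.take (t + 1) ++ il.drop (t + 2), j + 1)
    have e2 : sortf (il.take (t + 1) ++ il.drop (t + 2), j + 1)
        = ((il.take (t + 1) ++ il.drop (t + 2)).insertionSort (· ≤ ·), j + 1) := rfl
    rw [e2] at p2
    rw [hc] at *
    omega


end
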